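/- There exists a constant C > 0 such that for all k ∈ ℤ with k ≠ 0, all l ∈ ℤ, all η, ξ ∈ ℝ and all t > 0 satisfying √(l²+ξ²) ≤ 10t², one has 1/(1 + |t − η/k|) ≤ C·√(F(t,l,ξ))·(1 + (k−l)² + (η−ξ)²)^{3/2}. -/
import Mathlib


/-- `F(t,k,η) := ⨆_{j ∈ ℤ, j ≠ 0} 10/((1+(η/j − t)²)·⟨k−j⟩³)` with `⟨x⟩ := √(1+x²)`,
so `⟨k−j⟩³ = (1+(k−j)²)^{3/2}`. -/
noncomputable def F (t : ℝ) (k : ℤ) (η : ℝ) : ℝ :=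
  ⨆ j : {j : ℤ // j ≠ 0},
    10 / ((1 + (η / (j.1 : ℝ) - t) ^ 2) * (1 + ((k : ℝ) - (j.1 : ℝ)) ^ 2) ^ ((3 : ℝ) / 2))

set_option maxHeartbeats 1000000 in
/-- Lemma 4.4 ii): there is `C > 0` such that for `k ≠ 0`, `l ∈ ℤ`, `η, ξ ∈ ℝ` and `t > 0`
with `√(l²+ξ²) ≤ 10t²`,
`1/(1 + |t − η/k|) ≤ C·√(F(t,l,ξ))·(1 + (k−l)² + (η−ξ)²)^{3/2}`. -/
theorem lorentzian_le_sqrt_F : ∃ C : ℝ, 0 < C ∧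
    ∀ k : ℤ, k ≠ 0 → ∀ l : ℤ, ∀ η ξ : ℝ, ∀ t : ℝ, 0 < t →
      Real.sqrt ((l : ℝ) ^ 2 + ξ ^ 2) ≤ 10 * t ^ 2 →
      1 / (1 + |t - η / (k : ℝ)|) ≤
        C * Real.sqrt (F t l ξ) *
          (1 + ((k : ℝ) - (l : ℝ)) ^ 2 + (η - ξ) ^ 2) ^ ((3 : ℝ) / 2) := by
  refine ⟨1, one_pos, ?_⟩
  intro k hk l η ξ t ht _
  set D := |t - η / (k : ℝ)| with hDdef
  have hD0 : 0 ≤ D := abs_nonneg _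
  set Q := 1 + ((k : ℝ) - (l : ℝ)) ^ 2 + (η - ξ) ^ 2 with hQdef
  have hQ1 : (1 : ℝ) ≤ Q := by nlinarith [sq_nonneg ((k : ℝ) - l), sq_nonneg (η - ξ)]
  have hQ0 : (0 : ℝ) < Q := lt_of_lt_of_le one_pos hQ1
  set a := ξ / (k : ℝ) - t with hadef
  set B := 1 + ((l : ℝ) - (k : ℝ)) ^ 2 with hBdef
  have hB1 : (1 : ℝ) ≤ B := by nlinarith [sq_nonneg ((l : ℝ) - k)]
  have hB0 : (0 : ℝ) < B := lt_of_lt_of_le one_pos hB1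
  have hBQ : B ≤ Q := by nlinarith [sq_nonneg (η - ξ)]
  have ha2 : (0 : ℝ) < 1 + a ^ 2 := by positivity
  set BB := B ^ ((3 : ℝ) / 2) with hBBdef
  have hBB0 : (0 : ℝ) < BB := Real.rpow_pos_of_pos hB0 _
  set R := Q ^ ((3 : ℝ) / 2) with hRdef
  have hR0 : (0 : ℝ) < R := Real.rpow_pos_of_pos hQ0 _
  have hQR : Q ≤ R := by
    have := Real.rpow_le_rpow_of_exponent_le hQ1 (by norm_num : (1 : ℝ) ≤ 3 / 2)
    rwa [Real.rpow_one] at this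
  have hR1 : (1 : ℝ) ≤ R := le_trans hQ1 hQR
  have hBBR : BB ≤ R := Real.rpow_le_rpow hB0.le hBQ (by norm_num)
  -- the sup is bounded above by 10
  have hbdd : BddAbove (Set.range fun j : {j : ℤ // j ≠ 0} =>
      10 / ((1 + (ξ / (j.1 : ℝ) - t) ^ 2) * (1 + ((l : ℝ) - (j.1 : ℝ)) ^ 2) ^ ((3 : ℝ) / 2))) := by
    refine ⟨10, ?_⟩
    rintro x ⟨j, rfl⟩
    have hpos : (0 : ℝ) < (1 + ((l : ℝ) - (j.1 : ℝ)) ^ 2) ^ ((3 : ℝ) / 2) :=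
      Real.rpow_pos_of_pos (by positivity) _
    have h1 : (1 : ℝ) ≤ (1 + ((l : ℝ) - (j.1 : ℝ)) ^ 2) ^ ((3 : ℝ) / 2) :=
      Real.one_le_rpow (by nlinarith [sq_nonneg ((l : ℝ) - j.1)]) (by norm_num)
    have h2 : (1 : ℝ) ≤ (1 + (ξ / (j.1 : ℝ) - t) ^ 2) *
        (1 + ((l : ℝ) - (j.1 : ℝ)) ^ 2) ^ ((3 : ℝ) / 2) := by
      nlinarith [sq_nonneg (ξ / (j.1 : ℝ) - t)]
    calc 10 / ((1 + (ξ / (j.1 : ℝ) - t) ^ 2) * (1 + ((l : ℝ) - (j.1 : ℝ)) ^ 2) ^ ((3 : ℝ) / 2))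
        ≤ 10 / 1 := by
          apply div_le_div_of_nonneg_left (by norm_num) one_pos h2
      _ = 10 := by norm_num
  have hF : 10 / ((1 + a ^ 2) * BB) ≤ F t l ξ := le_ciSup hbdd ⟨k, hk⟩
  set S := 10 / ((1 + a ^ 2) * BB) with hSdef
  have hS0 : (0 : ℝ) < S := by positivity
  have hsqrt : Real.sqrt S ≤ Real.sqrt (F t l ξ) := Real.sqrt_le_sqrt hF
  -- key arithmetic bound: 1 + a² ≤ 2 (1+D)² (1 + (η-ξ)²)
  have hk1 : (1 : ℝ) ≤ |(k : ℝ)| := by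
    have := Int.one_le_abs hk
    exact_mod_cast this
  have habs : |a| ≤ D + |η - ξ| := by
    have haeq : a = -(t - η / (k : ℝ)) - (η - ξ) / (k : ℝ) := by
      rw [hadef, sub_div]
      ring
    rw [haeq]
    have h1 : |-(t - η / (k : ℝ)) - (η - ξ) / (k : ℝ)| ≤
        |t - η / (k : ℝ)| + |(η - ξ) / (k : ℝ)| := by
      calc |-(t - η / (k : ℝ)) - (η - ξ) / (k : ℝ)|
          ≤ |-(t - η / (k : ℝ))| + |(η - ξ) / (k : ℝ)| := abs_sub _ _
        _ = |t - η / (k : ℝ)| + |(η - ξ) / (k : ℝ)| := by rw [abs_neg]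
    have h2 : |(η - ξ) / (k : ℝ)| ≤ |η - ξ| := by
      rw [abs_div]
      calc |η - ξ| / |(k : ℝ)| ≤ |η - ξ| / 1 :=
            div_le_div_of_nonneg_left (abs_nonneg _) one_pos hk1
        _ = |η - ξ| := div_one _
    linarith
  have hkey : 1 + a ^ 2 ≤ 2 * (1 + D) ^ 2 * (1 + (η - ξ) ^ 2) := by
    have hm0 : 0 ≤ |η - ξ| := abs_nonneg _
    have h1 : a ^ 2 ≤ (D + |η - ξ|) ^ 2 := by
      have := pow_le_pow_left₀ (abs_nonneg a) habs 2
      rwa [sq_abs] at this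
    have h2 : |η - ξ| ^ 2 = (η - ξ) ^ 2 := sq_abs _
    nlinarith [sq_nonneg (D - |η - ξ|), sq_nonneg (D * |η - ξ|), mul_nonneg hD0 hm0]
  -- main squared inequality
  have hmain2 : (1 / (1 + D)) ^ 2 ≤ S * R ^ 2 := by
    have step1 : (1 / (1 + D)) ^ 2 ≤ 10 * R / (1 + a ^ 2) := by
      rw [div_pow, one_pow, div_le_div_iff₀ (by positivity) ha2]
      have hQ' : 1 + (η - ξ) ^ 2 ≤ Q := by nlinarith [sq_nonneg ((k : ℝ) - l)]
      have c1 : 2 * (1 + D) ^ 2 * (1 + (η - ξ) ^ 2) ≤ 2 * (1 + D) ^ 2 * R :=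
        mul_le_mul_of_nonneg_left (hQ'.trans hQR) (by positivity)
      have c2 : 2 * (1 + D) ^ 2 * R ≤ 10 * R * (1 + D) ^ 2 := by
        nlinarith [mul_nonneg (sq_nonneg (1 + D)) hR0.le]
      linarith
    have step2 : 10 * R / (1 + a ^ 2) ≤ S * R ^ 2 := by
      have : S * R ^ 2 = 10 * R ^ 2 / ((1 + a ^ 2) * BB) := by
        rw [hSdef]; ring
      rw [this, div_le_div_iff₀ ha2 (by positivity)]
      nlinarith [mul_le_mul_of_nonneg_left hBBR
        (by positivity : (0:ℝ) ≤ 10 * R * (1 + a ^ 2)), mul_pos hR0 ha2]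
    linarith
  have hfin : 1 / (1 + D) ≤ Real.sqrt S * R := by
    have h1 : Real.sqrt S * R = Real.sqrt (S * R ^ 2) := by
      rw [Real.sqrt_mul hS0.le, Real.sqrt_sq hR0.le]
    rw [h1]
    have h2 : 0 ≤ 1 / (1 + D) := by positivity
    exact (Real.le_sqrt h2 (by positivity)).mpr hmain2
  calc 1 / (1 + D) ≤ Real.sqrt S * R := hfin
    _ ≤ 1 * Real.sqrt (F t l ξ) * R := by
        rw [one_mul]
        exact mul_le_mul_of_nonneg_right hsqrt hR0.le
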